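/- arXiv:1501.01617 — 3 statements merged into one kernel-verified Lean document; each statement's English description precedes it below -/
import Mathlib

section
/- Let u, v be nonzero vectors in ℝ^d and let c = λu + (1−λ)v for some λ ∈ [0,1] with c ≠ 0. Then the angle between c and v is at most the angle between u and v; equivalently, ⟪c, v⟫/(‖c‖‖v‖) ≥ ⟪u, v⟫/(‖u‖‖v‖). -/
theorem convex_combination_angle (d : ℕ) (u v c : EuclideanSpace ℝ (Fin d))
    (hu : u ≠ 0) (hv : v ≠ 0) (hc : c ≠ 0)
    (lam : ℝ) (hlam0 : 0 ≤ lam) (hlam1 : lam ≤ 1)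
    (hcdef : c = lam • u + (1 - lam) • v) :
    inner ℝ u v / (‖u‖ * ‖v‖) ≤ (inner ℝ c v : ℝ) / (‖c‖ * ‖v‖) := by
  have hnu : (0:ℝ) < ‖u‖ := norm_pos_iff.mpr hu
  have hnv : (0:ℝ) < ‖v‖ := norm_pos_iff.mpr hv
  have hnc : (0:ℝ) < ‖c‖ := norm_pos_iff.mpr hc
  set t : ℝ := inner ℝ u v with ht
  have hs : (inner ℝ c v : ℝ) = lam * t + (1 - lam) * ‖v‖ ^ 2 := by
    rw [hcdef, inner_add_left, real_inner_smul_left, real_inner_smul_left,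
      real_inner_self_eq_norm_sq]
  have hcs : t ≤ ‖u‖ * ‖v‖ := real_inner_le_norm u v
  have hkey : t * ‖c‖ ≤ (inner ℝ c v : ℝ) * ‖u‖ := by
    rcases le_or_gt 0 t with htpos | htneg
    · -- t ≥ 0 : use ‖c‖ ≤ λ‖u‖ + (1-λ)‖v‖
      have htri : ‖c‖ ≤ lam * ‖u‖ + (1 - lam) * ‖v‖ := by
        rw [hcdef]
        calc ‖lam • u + (1 - lam) • v‖ ≤ ‖lam • u‖ + ‖(1 - lam) • v‖ := norm_add_le _ _
        _ = lam * ‖u‖ + (1 - lam) * ‖v‖ := by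
            rw [norm_smul, norm_smul, Real.norm_eq_abs, Real.norm_eq_abs,
              abs_of_nonneg hlam0, abs_of_nonneg (by linarith)]
      rw [hs]
      nlinarith [mul_le_mul_of_nonneg_left htri htpos,
        mul_nonneg (mul_nonneg (by linarith : (0:ℝ) ≤ 1 - lam) hnv.le)
          (by linarith : (0:ℝ) ≤ ‖u‖ * ‖v‖ - t)]
    · rcases le_or_gt 0 ((inner ℝ c v : ℝ)) with hspos | hsneg
      · nlinarith [hnc.le, hnu.le]
      · -- both t and ⟪c,v⟫ negative: compare squares
        have hnormc : ‖c‖ ^ 2 = lam ^ 2 * ‖u‖ ^ 2 + 2 * lam * (1 - lam) * t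
            + (1 - lam) ^ 2 * ‖v‖ ^ 2 := by
          rw [hcdef, norm_add_sq_real, norm_smul, norm_smul, real_inner_smul_left,
            real_inner_smul_right, Real.norm_eq_abs, Real.norm_eq_abs,
            abs_of_nonneg hlam0, abs_of_nonneg (by linarith : (0:ℝ) ≤ 1 - lam)]
          ring
        have hsq : (inner ℝ c v : ℝ) ^ 2 * ‖u‖ ^ 2 ≤ t ^ 2 * ‖c‖ ^ 2 := by
          have hcs2 : t ^ 2 ≤ ‖u‖ ^ 2 * ‖v‖ ^ 2 := by
            have := abs_real_inner_le_norm u v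
            nlinarith [abs_nonneg t, le_abs_self t, neg_abs_le t]
          have h2 : 2 * lam * t + (1 - lam) * ‖v‖ ^ 2 ≤ 0 := by
            rw [hs] at hsneg; nlinarith
          rw [hs, hnormc]
          nlinarith [mul_nonneg (mul_nonneg
            (by nlinarith : (0:ℝ) ≤ ‖u‖ ^ 2 * ‖v‖ ^ 2 - t ^ 2)
            (by linarith : (0:ℝ) ≤ 1 - lam))
            (by linarith : (0:ℝ) ≤ -(2 * lam * t + (1 - lam) * ‖v‖ ^ 2))]
        nlinarith [hsq, mul_pos (neg_pos.mpr hsneg) hnu, mul_pos (neg_pos.mpr htneg) hnc]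
  rw [div_le_div_iff₀ (by positivity) (by positivity)]
  nlinarith [hnv.le, hkey]
end

section
/- Let u, v be nonzero vectors in ℝ^d and c = λu + (1−λ)v, λ ∈ [0,1], c ≠ 0. Then ‖c/‖c‖ − v/‖v‖‖ ≤ ‖u/‖u‖ − v/‖v‖‖. -/
open RealInnerProductSpace

private lemma key_alg (a b K C lam : ℝ) (hK : 0 < K) (hb : 0 < b) (hC : 0 ≤ C)
    (hlam0 : 0 ≤ lam) (hlam1 : lam ≤ 1)
    (hcs : a ^ 2 ≤ b ^ 2 * K ^ 2)
    (hcsq : C ^ 2 = lam ^ 2 * K ^ 2 + 2 * lam * (1 - lam) * a + (1 - lam) ^ 2 * b ^ 2) :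
    a * C ≤ (lam * a + (1 - lam) * b ^ 2) * K := by
  have hid : ((lam * a + (1 - lam) * b ^ 2) * K) ^ 2 - (a * C) ^ 2
      = (b ^ 2 * K ^ 2 - a ^ 2) * (2 * lam * (1 - lam) * a + (1 - lam) ^ 2 * b ^ 2) := by
    linear_combination (-(a ^ 2)) * hcsq
  have hcs' : 0 ≤ b ^ 2 * K ^ 2 - a ^ 2 := by linarith
  by_cases h : 0 ≤ lam * a + (1 - lam) * b ^ 2
  · by_cases ha0 : a ≤ 0
    · have h1 : a * C ≤ 0 := mul_nonpos_of_nonpos_of_nonneg ha0 hC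
      nlinarith [mul_nonneg h hK.le]
    · push_neg at ha0
      have hf : 0 ≤ 2 * lam * (1 - lam) * a + (1 - lam) ^ 2 * b ^ 2 := by
        have h2 := mul_nonneg (mul_nonneg (mul_nonneg (by norm_num : (0:ℝ) ≤ 2) hlam0)
          (by linarith : (0:ℝ) ≤ 1 - lam)) ha0.le
        nlinarith [sq_nonneg ((1 - lam) * b)]
      have hsq : (a * C) ^ 2 ≤ ((lam * a + (1 - lam) * b ^ 2) * K) ^ 2 := by
        nlinarith [mul_nonneg hcs' hf]
      have h1 : 0 ≤ a * C := mul_nonneg ha0.le hC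
      have h2 : 0 ≤ (lam * a + (1 - lam) * b ^ 2) * K := mul_nonneg h hK.le
      exact (pow_le_pow_iff_left₀ h1 h2 two_ne_zero).mp hsq
  · push_neg at h
    have ha0 : a < 0 := by nlinarith
    have hf : 2 * lam * (1 - lam) * a + (1 - lam) ^ 2 * b ^ 2 ≤ 0 := by nlinarith
    have hsq : ((lam * a + (1 - lam) * b ^ 2) * K) ^ 2 ≤ (a * C) ^ 2 := by
      nlinarith [mul_nonpos_of_nonneg_of_nonpos hcs' hf]
    have h1 : a * C ≤ 0 := mul_nonpos_of_nonpos_of_nonneg ha0.le hC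
    have h2 : (lam * a + (1 - lam) * b ^ 2) * K ≤ 0 :=
      mul_nonpos_of_nonpos_of_nonneg h.le hK.le
    have hsq' : (-((lam * a + (1 - lam) * b ^ 2) * K)) ^ 2 ≤ (-(a * C)) ^ 2 := by
      rw [neg_pow, neg_pow]; linarith
    have := (pow_le_pow_iff_left₀ (by linarith) (by linarith) two_ne_zero).mp hsq'
    linarith

theorem convex_combination_normalized_closer (d : ℕ)
    (u v c : EuclideanSpace ℝ (Fin d))
    (hu : u ≠ 0) (hv : v ≠ 0) (hc : c ≠ 0)
    (lam : ℝ) (hlam0 : 0 ≤ lam) (hlam1 : lam ≤ 1)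
    (hcdef : c = lam • u + (1 - lam) • v) :
    ‖‖c‖⁻¹ • c - ‖v‖⁻¹ • v‖ ≤ ‖‖u‖⁻¹ • u - ‖v‖⁻¹ • v‖ := by
  have hK : (0:ℝ) < ‖u‖ := norm_pos_iff.mpr hu
  have hV : (0:ℝ) < ‖v‖ := norm_pos_iff.mpr hv
  have hC : (0:ℝ) < ‖c‖ := norm_pos_iff.mpr hc
  have expand : ∀ x : EuclideanSpace ℝ (Fin d), x ≠ 0 →
      ‖‖x‖⁻¹ • x - ‖v‖⁻¹ • v‖ ^ 2 = 2 - 2 * (⟪x, v⟫ / (‖x‖ * ‖v‖)) := by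
    intro x hx
    have hX : (0:ℝ) < ‖x‖ := norm_pos_iff.mpr hx
    rw [norm_sub_sq_real, real_inner_smul_left, real_inner_smul_right,
      norm_smul, norm_smul]
    rw [norm_inv, norm_norm, norm_inv, norm_norm]
    field_simp
    ring
  have cauchy : |⟪u, v⟫| ≤ ‖u‖ * ‖v‖ := abs_real_inner_le_norm u v
  have cauchy2 : ⟪u, v⟫ ^ 2 ≤ ‖v‖ ^ 2 * ‖u‖ ^ 2 := by
    nlinarith [abs_nonneg ⟪u, v⟫, sq_abs ⟪u, v⟫, mul_nonneg hK.le hV.le]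
  have hicv : ⟪c, v⟫ = lam * ⟪u, v⟫ + (1 - lam) * ‖v‖ ^ 2 := by
    rw [hcdef, inner_add_left, real_inner_smul_left, real_inner_smul_left,
      real_inner_self_eq_norm_sq]
  have hcsq : ‖c‖ ^ 2 = lam ^ 2 * ‖u‖ ^ 2 + 2 * lam * (1 - lam) * ⟪u, v⟫
      + (1 - lam) ^ 2 * ‖v‖ ^ 2 := by
    rw [← real_inner_self_eq_norm_sq, hcdef, inner_add_left, inner_add_right,
      inner_add_right, real_inner_smul_left, real_inner_smul_left,
      real_inner_smul_left, real_inner_smul_left, real_inner_smul_right,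
      real_inner_smul_right, real_inner_smul_right, real_inner_smul_right,
      real_inner_self_eq_norm_sq, real_inner_self_eq_norm_sq,
      real_inner_comm v u]
    ring
  have key : ⟪u, v⟫ * ‖c‖ ≤ ⟪c, v⟫ * ‖u‖ := by
    rw [hicv]
    exact key_alg ⟪u, v⟫ ‖v‖ ‖u‖ ‖c‖ lam hK hV hC.le hlam0 hlam1 cauchy2 hcsq
  have e1 := expand c hc
  have e2 := expand u hu
  have hdiv : ⟪u, v⟫ / (‖u‖ * ‖v‖) ≤ ⟪c, v⟫ / (‖c‖ * ‖v‖) := by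
    rw [div_le_div_iff₀ (by positivity) (by positivity)]
    nlinarith [hV]
  have hsq2 : ‖‖c‖⁻¹ • c - ‖v‖⁻¹ • v‖ ^ 2 ≤ ‖‖u‖⁻¹ • u - ‖v‖⁻¹ • v‖ ^ 2 := by
    rw [e1, e2]; linarith
  exact (pow_le_pow_iff_left₀ (norm_nonneg _) (norm_nonneg _) two_ne_zero).mp hsq2
end

section
/- Combining the previous two facts: for nonzero u, v ∈ ℝ^d and c = λu + (1−λ)v nonzero with λ ∈ [0,1], one has ‖c/‖c‖ − v/‖v‖‖ ≤ (2/‖v‖)·‖u − v‖. -/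
lemma normalized_diff_bound {E : Type*} [NormedAddCommGroup E] [NormedSpace ℝ E]
    (c v : E) (hc : c ≠ 0) (hv : v ≠ 0) :
    ‖‖c‖⁻¹ • c - ‖v‖⁻¹ • v‖ ≤ (2 / ‖v‖) * ‖c - v‖ := by
  have hcn : (0:ℝ) < ‖c‖ := norm_pos_iff.mpr hc
  have hvn : (0:ℝ) < ‖v‖ := norm_pos_iff.mpr hv
  have key : ‖c‖⁻¹ • c - ‖v‖⁻¹ • v = ‖v‖⁻¹ • (c - v) + (‖c‖⁻¹ - ‖v‖⁻¹) • c := by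
    simp only [smul_sub, sub_smul]; abel
  rw [key]
  have h1 : ‖‖v‖⁻¹ • (c - v)‖ = ‖v‖⁻¹ * ‖c - v‖ := by
    rw [norm_smul, Real.norm_eq_abs, abs_of_nonneg (by positivity)]
  have h2 : ‖(‖c‖⁻¹ - ‖v‖⁻¹) • c‖ ≤ ‖v‖⁻¹ * ‖c - v‖ := by
    rw [norm_smul, Real.norm_eq_abs]
    have : |‖c‖⁻¹ - ‖v‖⁻¹| = |‖v‖ - ‖c‖| / (‖c‖ * ‖v‖) := by
      rw [show ‖c‖⁻¹ - ‖v‖⁻¹ = (‖v‖ - ‖c‖)/(‖c‖ * ‖v‖) by field_simp,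
        abs_div, abs_of_pos (show (0:ℝ) < ‖c‖ * ‖v‖ by positivity)]
    rw [this]
    have hb : |‖v‖ - ‖c‖| ≤ ‖c - v‖ := by
      rw [abs_sub_comm]; exact abs_norm_sub_norm_le c v
    calc |‖v‖ - ‖c‖| / (‖c‖ * ‖v‖) * ‖c‖ = |‖v‖ - ‖c‖| / ‖v‖ := by field_simp
      _ ≤ ‖c - v‖ / ‖v‖ := by gcongr
      _ = ‖v‖⁻¹ * ‖c - v‖ := by ring
  calc ‖‖v‖⁻¹ • (c - v) + (‖c‖⁻¹ - ‖v‖⁻¹) • c‖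
      ≤ ‖‖v‖⁻¹ • (c - v)‖ + ‖(‖c‖⁻¹ - ‖v‖⁻¹) • c‖ := norm_add_le _ _
    _ ≤ ‖v‖⁻¹ * ‖c - v‖ + ‖v‖⁻¹ * ‖c - v‖ := by rw [h1]; linarith
    _ = (2 / ‖v‖) * ‖c - v‖ := by ring

theorem convex_combination_normalized_bound (d : ℕ)
    (u v c : EuclideanSpace ℝ (Fin d))
    (hu : u ≠ 0) (hv : v ≠ 0) (hc : c ≠ 0)
    (lam : ℝ) (hlam0 : 0 ≤ lam) (hlam1 : lam ≤ 1)
    (hcdef : c = lam • u + (1 - lam) • v) :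
    ‖‖c‖⁻¹ • c - ‖v‖⁻¹ • v‖ ≤ (2 / ‖v‖) * ‖u - v‖ := by
  have hcv : c - v = lam • (u - v) := by rw [hcdef]; simp [smul_sub, sub_smul]; abel
  have h1 : ‖c - v‖ ≤ ‖u - v‖ := by
    rw [hcv, norm_smul, Real.norm_eq_abs, abs_of_nonneg hlam0]
    nlinarith [norm_nonneg (u - v)]
  have := normalized_diff_bound c v hc hv
  have hvpos : (0:ℝ) < ‖v‖ := norm_pos_iff.mpr hv
  calc ‖‖c‖⁻¹ • c - ‖v‖⁻¹ • v‖ ≤ (2 / ‖v‖) * ‖c - v‖ := this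
    _ ≤ (2 / ‖v‖) * ‖u - v‖ := by
        apply mul_le_mul_of_nonneg_left h1 (by positivity)
end
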